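/- Every parabolic subalgebra of D^{(n)} is non-degenerate: if p = ⊕_{j∈ℤ} p_j is a parabolic subalgebra of D^{(n)}, then for every integer j > 0 the subspace p_{−j} has finite codimension in D^{(n)}_{−j}. -/

import Mathlib

open Polynomial

/-- The weight operator `f(D)` on `ℂ[t,t⁻¹]` (Laurent polynomials), acting by
`f(D)(t^j) = f(j)·t^j`, where `t^j` is the basis vector `Finsupp.single j 1`. -/
noncomputable def wtOp (f : ℂ[X]) : Module.End ℂ (LaurentPolynomial ℂ) :=
  (AddMonoidAlgebra.coeffLinearEquiv ℂ).symm.toLinearMap ∘ₗ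
    (Finsupp.lsum ℂ fun j : ℤ => f.eval (j : ℂ) • Finsupp.lsingle j) ∘ₗ
    (AddMonoidAlgebra.coeffLinearEquiv ℂ).toLinearMap

/-- The shift operator: multiplication by `t^k`, i.e. `t^j ↦ t^{j+k}`. -/
noncomputable def shOp (k : ℤ) : Module.End ℂ (LaurentPolynomial ℂ) :=
  AddMonoidAlgebra.mapDomainLinearMap ℂ ℂ fun j : ℤ => j + k

/-- The operator `t^k f(D)` on `ℂ[t,t⁻¹]`: first apply `f(D)`, then multiply by `t^k`. -/
noncomputable def op (k : ℤ) (f : ℂ[X]) : Module.End ℂ (LaurentPolynomial ℂ) :=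
  (shOp k).comp (wtOp f)

/-- The falling-factorial polynomial `[w]_n = w(w−1)⋯(w−n+1)`. -/
noncomputable def ffp (n : ℕ) : ℂ[X] :=
  ∏ i ∈ Finset.range n, (X - C (i : ℂ))

/-- The degree-`j` component `D^{(n)}_j = {t^j f(D)[D]_n : f ∈ ℂ[w]}` of the graded Lie
algebra `D^{(n)} = D·∂_t^n` of differential operators on the circle. -/
noncomputable def Dnj (n : ℕ) (j : ℤ) : Submodule ℂ (Module.End ℂ (LaurentPolynomial ℂ)) :=
  Submodule.span ℂ {E | ∃ f : ℂ[X], E = op j (f * ffp n)}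

section Infra
lemma op_single (k : ℤ) (f : ℂ[X]) (m : ℤ) (c : ℂ) :
    op k f (AddMonoidAlgebra.single m c) = AddMonoidAlgebra.single (m + k) (f.eval (m:ℂ) * c) := by
  show shOp k (wtOp f (AddMonoidAlgebra.single m c)) = _
  have h1 : wtOp f (AddMonoidAlgebra.single m c) = AddMonoidAlgebra.single m (f.eval (m:ℂ) * c) := by
    simp only [wtOp, LinearMap.comp_apply, LinearEquiv.coe_coe,
      AddMonoidAlgebra.coeffLinearEquiv_apply, AddMonoidAlgebra.coeff_single, Finsupp.lsum_single,
      LinearMap.smul_apply, Finsupp.lsingle_apply, Finsupp.smul_single, smul_eq_mul,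
      AddMonoidAlgebra.coeffLinearEquiv_symm_apply]
    rfl
  rw [h1, shOp, AddMonoidAlgebra.mapDomainLinearMap_single]

lemma op_mul (a b : ℤ) (F G : ℂ[X]) :
    (op a F) * (op b G) = op (a+b) ((F.comp (X + C (b:ℂ))) * G) := by
  apply AddMonoidAlgebra.lhom_ext'
  intro m
  apply LinearMap.ext
  intro c
  show (op a F) ((op b G) (AddMonoidAlgebra.single m c)) = (op (a+b) _) (AddMonoidAlgebra.single m c)
  rw [op_single, op_single, op_single, eval_mul, eval_comp, eval_add, eval_X, eval_C,
    add_assoc]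
  push_cast
  rw [mul_assoc, add_comm a b]

lemma op_add (k : ℤ) (F G : ℂ[X]) : op k (F + G) = op k F + op k G := by
  apply AddMonoidAlgebra.lhom_ext'
  intro m
  apply LinearMap.ext
  intro c
  show op k (F+G) (AddMonoidAlgebra.single m c)
      = (op k F) (AddMonoidAlgebra.single m c) + (op k G) (AddMonoidAlgebra.single m c)
  rw [op_single, op_single, op_single, eval_add, add_mul, AddMonoidAlgebra.single_add]

lemma op_smul (k : ℤ) (s : ℂ) (F : ℂ[X]) : op k (s • F) = s • op k F := by
  apply AddMonoidAlgebra.lhom_ext'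
  intro m
  apply LinearMap.ext
  intro c
  show op k (s • F) (AddMonoidAlgebra.single m c) = s • (op k F) (AddMonoidAlgebra.single m c)
  rw [op_single, op_single, AddMonoidAlgebra.smul_single, eval_smul, smul_eq_mul, smul_eq_mul, mul_assoc]

lemma op_zero (k : ℤ) : op k (0 : ℂ[X]) = 0 := by
  have := op_smul k 0 0
  simpa using this

lemma op_sub (k : ℤ) (F G : ℂ[X]) : op k (F - G) = op k F - op k G := by
  apply AddMonoidAlgebra.lhom_ext'
  intro m
  apply LinearMap.ext
  intro c
  show op k (F-G) (AddMonoidAlgebra.single m c)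
      = (op k F) (AddMonoidAlgebra.single m c) - (op k G) (AddMonoidAlgebra.single m c)
  rw [op_single, op_single, op_single, eval_sub, sub_mul, AddMonoidAlgebra.single_sub]

lemma op_lie (a b : ℤ) (F G : ℂ[X]) :
    ⁅op a F, op b G⁆
      = op (a+b) ((F.comp (X + C (b:ℂ))) * G - (G.comp (X + C (a:ℂ))) * F) := by
  rw [Ring.lie_def, op_mul, op_mul, add_comm b a, op_sub]

noncomputable def opL (k : ℤ) : ℂ[X] →ₗ[ℂ] Module.End ℂ (LaurentPolynomial ℂ) where
  toFun := op k
  map_add' := op_add k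
  map_smul' := op_smul k

lemma mem_Dnj {n : ℕ} {k : ℤ} {E : Module.End ℂ (LaurentPolynomial ℂ)} :
    E ∈ Dnj n k ↔ ∃ f : ℂ[X], E = op k (f * ffp n) := by
  constructor
  · intro h
    refine Submodule.span_induction (fun x hx => hx) ⟨0, by rw [zero_mul, op_zero]⟩
      (fun x y _ _ ⟨f, hf⟩ ⟨g, hg⟩ => ⟨f + g, by rw [hf, hg, add_mul, op_add]⟩)
      (fun s x _ ⟨f, hf⟩ => ⟨s • f, by rw [hf, smul_mul_assoc, op_smul]⟩) h
  · rintro ⟨f, rfl⟩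
    exact Submodule.subset_span ⟨f, rfl⟩

lemma ffp_monic (n : ℕ) : (ffp n).Monic :=
  monic_prod_of_monic _ _ fun i _ => monic_X_sub_C _

lemma ffp_ne_zero (n : ℕ) : ffp n ≠ 0 := (ffp_monic n).ne_zero

lemma ffp_eval_neg_ne_zero (n : ℕ) (a : ℤ) (ha : 0 < a) : (ffp n).eval (-(a:ℂ)) ≠ 0 := by
  rw [ffp, eval_prod]
  refine Finset.prod_ne_zero_iff.mpr fun i _ => ?_
  simp only [eval_sub, eval_X, eval_C]
  intro h
  have h2 : ((a + i : ℤ) : ℂ) = 0 := by push_cast; linear_combination -h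
  have h3 : (a + i : ℤ) = 0 := by exact_mod_cast h2
  omega
end Infra

section Deg
noncomputable def dlt (c : ℂ) (P : ℂ[X]) : ℂ[X] := P.comp (X - C c) - P

def Good (c : ℂ) (P : ℂ[X]) (d : ℕ) : Prop :=
  (dlt c P).natDegree ≤ d ∧ (dlt c P).coeff d = -c*(d+1) ∧ P.natDegree ≤ d+1 ∧ P.coeff (d+1) = 1

lemma dlt_mul (c r : ℂ) (P : ℂ[X]) :
    dlt c (P * (X - C r)) = C (-c) * P + dlt c P * (X - C (r + c)) := by
  simp only [dlt, mul_comp, sub_comp, X_comp, C_comp, C_neg, C_add]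
  ring

lemma good_step (c r : ℂ) (P : ℂ[X]) (d : ℕ) (h : Good c P d) :
    Good c (P * (X - C r)) (d+1) := by
  obtain ⟨h1, h2, h3, h4⟩ := h
  have hd0 : (dlt c P).coeff (d+1) = 0 :=
    coeff_eq_zero_of_natDegree_lt (lt_of_le_of_lt h1 (Nat.lt_succ_self d))
  refine ⟨?_, ?_, ?_, ?_⟩
  · rw [dlt_mul]
    refine le_trans (natDegree_add_le _ _) (max_le ?_ ?_)
    · exact le_trans (natDegree_C_mul_le _ _) (le_trans h3 le_rfl)
    · refine le_trans (natDegree_mul_le) ?_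
      rw [natDegree_X_sub_C]
      omega
  · rw [dlt_mul, coeff_add, coeff_C_mul, coeff_mul_X_sub_C, h4, hd0, h2]
    push_cast
    ring
  · refine le_trans natDegree_mul_le ?_
    rw [natDegree_X_sub_C]
    omega
  · rw [coeff_mul_X_sub_C, h4,
      coeff_eq_zero_of_natDegree_lt (lt_of_le_of_lt h3 (Nat.lt_succ_self _))]
    ring

lemma good_ffp (c : ℂ) : ∀ n : ℕ, Good c (ffp (n+1)) n := by
  intro n
  induction n with
  | zero =>
    have h : ffp 1 = X - C 0 := by
      rw [ffp, Finset.prod_range_one, Nat.cast_zero]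
    have hd : dlt c (ffp 1) = C (-c) := by
      rw [h, dlt]
      simp only [sub_comp, X_comp, C_comp, C_neg]
      ring
    refine ⟨?_, ?_, ?_, ?_⟩
    · rw [hd, natDegree_C]
    · rw [hd, coeff_C]; norm_num
    · rw [h, natDegree_X_sub_C]
    · rw [h, coeff_sub, coeff_X_one, coeff_C]; norm_num
  | succ m ih =>
    have h : ffp (m+2) = ffp (m+1) * (X - C ((m+1 : ℕ) : ℂ)) := by
      rw [ffp, Finset.prod_range_succ, ffp]
    rw [h]
    exact good_step c _ _ m ih

lemma good_mon (c : ℂ) : ∀ m n : ℕ, Good c (X^m * ffp (n+1)) (m + n) := by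
  intro m
  induction m with
  | zero => intro n; simpa using good_ffp c n
  | succ m ih =>
    intro n
    have h : X^(m+1) * ffp (n+1) = (X^m * ffp (n+1)) * (X - C 0) := by
      rw [C_0, sub_zero]; ring
    have := good_step c 0 _ _ (ih n)
    rw [← h] at this
    have harr : m + n + 1 = m + 1 + n := by omega
    rw [harr] at this
    exact this
end Deg

/-- Proposition 3.7 b: every parabolic subalgebra `p = ⊕_j p_j` of
`D^{(n)}` is non-degenerate: for each `j > 0`, the subspace `p_{−j}` has finite
codimension in `D^{(n)}_{−j}`, i.e. the image of `D^{(n)}_{−j}` in the quotient of the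
ambient space by `p_{−j}` (which is `D^{(n)}_{−j}/p_{−j}`, as `p_{−j} ⊆ D^{(n)}_{−j}`)
is finite-dimensional. -/
theorem stmt12 (n : ℕ) (hn : 1 ≤ n)
    (p : ℤ → Submodule ℂ (Module.End ℂ (LaurentPolynomial ℂ)))
    (hple : ∀ j : ℤ, p j ≤ Dnj n j)
    (hpbr : ∀ i j : ℤ, ∀ x ∈ p i, ∀ y ∈ p j, ⁅x, y⁆ ∈ p (i + j))
    (hpge : ∀ j : ℤ, 0 ≤ j → p j = Dnj n j)
    (hpneg : ∃ j : ℤ, j < 0 ∧ p j ≠ ⊥)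
    (j : ℤ) (hj : 0 < j) :
    FiniteDimensional ℂ ↥((Dnj n (-j)).map (p (-j)).mkQ) := by
  obtain ⟨n', rfl⟩ : ∃ n', n = n' + 1 := ⟨n - 1, by omega⟩
  -- bracket helper
  have hlie : ∀ a b : ℤ, ∀ F G : ℂ[X], op a F ∈ p a → op b G ∈ p b →
      op (a+b) ((F.comp (X + C (b:ℂ))) * G - (G.comp (X + C (a:ℂ))) * F) ∈ p (a+b) := by
    intro a b F G hF hG
    have := hpbr a b _ hF _ hG
    rwa [op_lie] at this
  -- closure under multiplication by dlt of ideal elements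
  have hclos : ∀ a : ℤ, ∀ P g : ℂ[X], op (-a) P ∈ p (-a) →
      op (-a) (P * dlt (a:ℂ) (g * ffp (n'+1))) ∈ p (-a) := by
    intro a P g hP
    have h0 : op 0 (g * ffp (n'+1)) ∈ p 0 := by
      rw [hpge 0 le_rfl]; exact mem_Dnj.mpr ⟨g, rfl⟩
    have h2 := hlie 0 (-a) _ _ h0 hP
    rw [zero_add] at h2
    convert h2 using 2
    rw [dlt]
    push_cast
    simp only [C_neg, C_0, add_zero, comp_X, ← sub_eq_add_neg]
    ring
  -- doubling step
  have hdbl : ∀ a : ℤ, 0 < a →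
      (∃ F : ℂ[X], F ≠ 0 ∧ (∃ g, F = g * ffp (n'+1)) ∧ op (-a) F ∈ p (-a)) →
      ∃ F : ℂ[X], F ≠ 0 ∧ (∃ g, F = g * ffp (n'+1)) ∧ op (-(2*a)) F ∈ p (-(2*a)) := by
    intro a ha h
    obtain ⟨F, hF0, ⟨f, hFf⟩, hFp⟩ := h
    have hCa : C ((a:ℂ)) ≠ 0 := by
      simp only [ne_eq, C_eq_zero, Int.cast_eq_zero]
      omega
    have hσF : F.comp (X - C (a:ℂ)) ≠ 0 := by
      rw [sub_eq_add_neg, ← C_neg]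
      exact comp_X_add_C_ne_zero_iff.mpr hF0
    -- membership of the double-bracket element
    have hE : ∀ g : ℂ[X],
        op (-(2*a)) (F.comp (X - C (a:ℂ)) * F *
          (dlt (a:ℂ) (g * ffp (n'+1)) - (dlt (a:ℂ) (g * ffp (n'+1))).comp (X - C (a:ℂ))))
          ∈ p (-(2*a)) := by
      intro g
      have hy := hclos a F g hFp
      have h2 := hlie (-a) (-a) F (F * dlt (a:ℂ) (g * ffp (n'+1))) hFp hy
      rw [show (-a) + (-a) = -(2*a) by ring] at h2
      convert h2 using 2
      push_cast
      simp only [mul_comp, C_neg, ← sub_eq_add_neg]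
      ring
    -- choose a witness Q with nonvanishing second difference
    have hwit : ∃ g : ℂ[X],
        dlt (a:ℂ) (g * ffp (n'+1)) - (dlt (a:ℂ) (g * ffp (n'+1))).comp (X - C (a:ℂ)) ≠ 0 := by
      by_cases h1 : dlt (a:ℂ) (X * ffp (n'+1))
          - (dlt (a:ℂ) (X * ffp (n'+1))).comp (X - C (a:ℂ)) = 0
      · refine ⟨X * X, fun h2 => ?_⟩
        -- derive a contradiction
        have h1' := h1
        have h2' := h2
        simp only [dlt, sub_comp, mul_comp, X_comp, C_comp] at h1' h2'
        have key : (2*C ((a:ℂ))) * ((X - C (a:ℂ) - C (a:ℂ)) * (((ffp (n'+1)).comp (X - C (a:ℂ))).comp (X - C (a:ℂ)))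
            - (X - C (a:ℂ)) * ((ffp (n'+1)).comp (X - C (a:ℂ)))) = 0 := by
          linear_combination h2' - X * h1'
        have hv := (mul_eq_zero.mp key).resolve_left (mul_ne_zero two_ne_zero hCa)
        have hu : (X - C (a:ℂ)) * ((ffp (n'+1)).comp (X - C (a:ℂ))) - X * ffp (n'+1) = 0 := by
          linear_combination h1' + hv
        have hev := congrArg (eval 0) hu
        simp only [eval_sub, eval_mul, eval_X, eval_C, eval_comp, zero_mul, zero_sub, sub_zero,
          eval_zero] at hev
        have haC : -((a:ℤ):ℂ) ≠ 0 := by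
          simp only [ne_eq, neg_eq_zero, Int.cast_eq_zero]
          omega
        exact (mul_ne_zero haC (ffp_eval_neg_ne_zero (n'+1) a ha)) hev
      · exact ⟨X, h1⟩
    obtain ⟨g, hg⟩ := hwit
    refine ⟨F.comp (X - C (a:ℂ)) * F *
      (dlt (a:ℂ) (g * ffp (n'+1)) - (dlt (a:ℂ) (g * ffp (n'+1))).comp (X - C (a:ℂ))),
      mul_ne_zero (mul_ne_zero hσF hF0) hg, ⟨?_, ?_⟩⟩
    · exact ⟨F.comp (X - C (a:ℂ)) * f *
        (dlt (a:ℂ) (g * ffp (n'+1)) - (dlt (a:ℂ) (g * ffp (n'+1))).comp (X - C (a:ℂ))),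
        by rw [hFf]; ring⟩
    · exact hE g
  -- base case from hpneg
  obtain ⟨j0, hj0neg, hj0⟩ := hpneg
  have hbase : ∃ F : ℂ[X], F ≠ 0 ∧ (∃ g, F = g * ffp (n'+1)) ∧ op (-(-j0)) F ∈ p (-(-j0)) := by
    obtain ⟨x, hxp, hx0⟩ := Submodule.exists_mem_ne_zero_of_ne_bot hj0
    obtain ⟨f, rfl⟩ := mem_Dnj.mp (hple j0 hxp)
    refine ⟨f * ffp (n'+1), fun h => hx0 ?_, ⟨f, rfl⟩, by rwa [neg_neg]⟩
    rw [h, op_zero]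
  -- existence at all levels -(2^t * (-j0))
  have hlev : ∀ t : ℕ, ∃ F : ℂ[X], F ≠ 0 ∧ (∃ g, F = g * ffp (n'+1)) ∧
      op (-(2^t * (-j0))) F ∈ p (-(2^t * (-j0))) := by
    intro t
    induction t with
    | zero => simpa using hbase
    | succ t ih =>
      have := hdbl (2^t * (-j0)) (mul_pos (pow_pos (by norm_num) t) (by omega)) ih
      rwa [show 2*(2^t*(-j0)) = 2^(t+1)*(-j0) by ring] at this
  -- pick a level below -j
  obtain ⟨t, hta⟩ : ∃ t : ℕ, j ≤ 2^t * (-j0) := by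
    refine ⟨j.toNat, ?_⟩
    calc j ≤ (j.toNat : ℤ) := Int.self_le_toNat j
    _ ≤ 2^j.toNat := by exact_mod_cast (Nat.lt_two_pow_self (n := j.toNat)).le
    _ ≤ 2^j.toNat * (-j0) := le_mul_of_one_le_right (by positivity) (by omega)
  obtain ⟨F, hF0, ⟨f, hFf⟩, hFp⟩ := hlev t
  -- the final descent to level -j
  have hFj : ∃ F0 : ℂ[X], F0 ≠ 0 ∧ (∃ g, F0 = g * ffp (n'+1)) ∧ op (-j) F0 ∈ p (-j) := by
    set a : ℤ := 2^t * (-j0) with haa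
    set s : ℤ := a - j with hss
    have hs : 0 ≤ s := by omega
    have ha : 0 < a := mul_pos (pow_pos (by norm_num) t) (by omega)
    have hT : ∀ g : ℂ[X],
        op (-j) ((g * ffp (n'+1)).comp (X - C (a:ℂ)) * F
          - F.comp (X + C (s:ℂ)) * (g * ffp (n'+1))) ∈ p (-j) := by
      intro g
      have hx : op s (g * ffp (n'+1)) ∈ p s := by
        rw [hpge s hs]; exact mem_Dnj.mpr ⟨g, rfl⟩
      have h2 := hlie s (-a) _ F hx hFp
      rw [show s + -a = -j by omega] at h2
      convert h2 using 2
      push_cast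
      rw [C_neg, ← sub_eq_add_neg]
    have hCa : C ((a:ℂ)) ≠ 0 := by
      simp only [ne_eq, C_eq_zero, Int.cast_eq_zero]
      omega
    have hτF : F.comp (X + C (s:ℂ)) ≠ 0 := comp_X_add_C_ne_zero_iff.mpr hF0
    by_cases hT1 : (ffp (n'+1)).comp (X - C (a:ℂ)) * F
        - F.comp (X + C (s:ℂ)) * ffp (n'+1) = 0
    · refine ⟨-(C ((a:ℂ))) * (F.comp (X + C (s:ℂ))) * ffp (n'+1),
        mul_ne_zero (mul_ne_zero (neg_ne_zero.mpr hCa) hτF) (ffp_ne_zero _),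
        ⟨-(C ((a:ℂ))) * (F.comp (X + C (s:ℂ))), by ring⟩, ?_⟩
      have heq : (X * ffp (n'+1)).comp (X - C (a:ℂ)) * F
          - F.comp (X + C (s:ℂ)) * (X * ffp (n'+1))
          = -(C ((a:ℂ))) * (F.comp (X + C (s:ℂ))) * ffp (n'+1) := by
        rw [mul_comp, X_comp]
        linear_combination (X - C ((a:ℂ))) * hT1
      have := hT X
      rwa [heq] at this
    · refine ⟨_, hT1, ⟨(ffp (n'+1)).comp (X - C (a:ℂ)) * f - F.comp (X + C (s:ℂ)),
        by rw [hFf]; ring⟩, ?_⟩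
      have := hT 1
      simpa using this
  obtain ⟨F0, hF00, ⟨f0, hF0f⟩, hF0p⟩ := hFj
  -- the finite-dimensional complement
  set N : ℕ := F0.natDegree + n' + 1 with hN
  haveI : FiniteDimensional ℂ (degreeLT ℂ N : Submodule ℂ ℂ[X]) :=
    (degreeLTEquiv ℂ N).symm.finiteDimensional
  set W : Submodule ℂ (Module.End ℂ (LaurentPolynomial ℂ)) := (degreeLT ℂ N).map (opL (-j))
    with hW
  have hjC : ((j:ℂ)) ≠ 0 := by
    simp only [ne_eq, Int.cast_eq_zero]
    omega
  -- degree data for the correction terms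
  have hHm : ∀ m : ℕ, (dlt ((j:ℂ)) (X^m * ffp (n'+1))).natDegree = m + n'
      ∧ dlt ((j:ℂ)) (X^m * ffp (n'+1)) ≠ 0
      ∧ (dlt ((j:ℂ)) (X^m * ffp (n'+1))).leadingCoeff = -(j:ℂ)*((m+n':ℕ)+1) := by
    intro m
    obtain ⟨g1, g2, g3, g4⟩ := good_mon ((j:ℂ)) m n'
    have hcast : ((m+n' : ℕ) : ℂ) + 1 ≠ 0 := by
      have : ((m+n' : ℕ) : ℂ) + 1 = ((m+n'+1 : ℕ) : ℂ) := by push_cast; ring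
      rw [this]
      exact Nat.cast_ne_zero.mpr (Nat.succ_ne_zero _)
    have hco : (dlt ((j:ℂ)) (X^m * ffp (n'+1))).coeff (m+n') ≠ 0 := by
      rw [g2]
      exact mul_ne_zero (neg_ne_zero.mpr hjC) hcast
    have hne : dlt ((j:ℂ)) (X^m * ffp (n'+1)) ≠ 0 := fun h => hco (by rw [h, coeff_zero])
    have hdeg : (dlt ((j:ℂ)) (X^m * ffp (n'+1))).natDegree = m + n' :=
      le_antisymm g1 (le_natDegree_of_ne_zero hco)
    exact ⟨hdeg, hne, by rw [leadingCoeff, hdeg, g2]⟩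
  have hmem_dlt : ∀ m : ℕ, op (-j) (F0 * dlt ((j:ℂ)) (X^m * ffp (n'+1))) ∈ p (-j) :=
    fun m => hclos j F0 (X^m) hF0p
  -- main induction: every element of the ideal is in p(-j) ⊔ W
  have main : ∀ d : ℕ, ∀ G : ℂ[X], G.natDegree < d → (∃ g, G = g * ffp (n'+1)) →
      op (-j) G ∈ p (-j) ⊔ W := by
    intro d
    induction d with
    | zero => intro G h _; exact absurd h (Nat.not_lt_zero _)
    | succ d ih =>
      intro G hGd hGI
      obtain ⟨g, hGg⟩ := hGI
      by_cases hGN : G.natDegree < N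
      · refine Submodule.mem_sup_right ⟨G, mem_degreeLT.mpr ?_, rfl⟩
        exact lt_of_le_of_lt degree_le_natDegree (by exact_mod_cast hGN)
      · push_neg at hGN
        have hG0 : G ≠ 0 := by
          intro h
          rw [h, natDegree_zero] at hGN
          omega
        set m : ℕ := G.natDegree - (F0.natDegree + n') with hm
        obtain ⟨hQdeg, hQ0, hQlead⟩ := hHm m
        set Q : ℂ[X] := dlt ((j:ℂ)) (X^m * ffp (n'+1)) with hQ
        set H : ℂ[X] := F0 * Q with hH
        have hH0 : H ≠ 0 := mul_ne_zero hF00 hQ0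
        have hHdeg : H.natDegree = G.natDegree := by
          rw [hH, natDegree_mul hF00 hQ0, hQdeg]
          omega
        have hHlead : H.leadingCoeff ≠ 0 := leadingCoeff_ne_zero.mpr hH0
        set c : ℂ := G.leadingCoeff / H.leadingCoeff with hc
        have hc0 : c ≠ 0 := div_ne_zero (leadingCoeff_ne_zero.mpr hG0) hHlead
        have hdeg_eq : G.degree = (C c * H).degree := by
          rw [degree_mul, degree_C hc0, zero_add, degree_eq_natDegree hG0,
            degree_eq_natDegree hH0, hHdeg]
        have hlead_eq : G.leadingCoeff = (C c * H).leadingCoeff := by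
          rw [leadingCoeff_mul, leadingCoeff_C, hc, div_mul_cancel₀ _ hHlead]
        have hsub := degree_sub_lt hdeg_eq hG0 hlead_eq
        have hlt : (G - C c * H).natDegree < d + 1 := by
          rcases eq_or_ne (G - C c * H) 0 with h | h
          · rw [h, natDegree_zero]
            omega
          · exact lt_of_lt_of_le (natDegree_lt_natDegree h hsub) (by omega)
        have hG'mem : op (-j) (G - C c * H) ∈ p (-j) ⊔ W := by
          rcases eq_or_ne (G - C c * H) 0 with h | h
          · rw [h, op_zero]
            exact zero_mem _
          · refine ih _ ?_ ⟨g - C c * (f0 * Q), ?_⟩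
            · have := natDegree_lt_natDegree h hsub
              omega
            · rw [hGg, hH, hF0f]
              ring
        have hCH : op (-j) (C c * H) ∈ p (-j) := by
          rw [← smul_eq_C_mul, op_smul]
          exact Submodule.smul_mem _ _ (hmem_dlt m)
        have hGeq : G = (G - C c * H) + C c * H := by ring
        rw [hGeq, op_add]
        exact Submodule.add_mem _ hG'mem (Submodule.mem_sup_left hCH)
  -- wrap up
  have hDle : Dnj (n'+1) (-j) ≤ p (-j) ⊔ W := by
    apply Submodule.span_le.mpr
    rintro E ⟨g, rfl⟩
    exact main ((g * ffp (n'+1)).natDegree + 1) _ (Nat.lt_succ_self _) ⟨g, rfl⟩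
  have hfin : (Dnj (n'+1) (-j)).map (p (-j)).mkQ ≤ W.map (p (-j)).mkQ := by
    refine le_trans (Submodule.map_mono hDle) ?_
    rw [Submodule.map_sup]
    refine sup_le ?_ le_rfl
    rintro x ⟨y, hy, rfl⟩
    have h0 : (p (-j)).mkQ y = 0 := by
      rw [Submodule.mkQ_apply, Submodule.Quotient.mk_eq_zero]
      exact hy
    rw [h0]
    exact zero_mem _
  exact Submodule.finiteDimensional_of_le hfin
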